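/- With the initial monomials in(Q_{i₀…i_{2k}}) = x_{i₀} y_{i₁} x_{i₂} y_{i₃} ⋯ y_{i_{2k−1}} x_{i_{2k}} for each odd subset {i₀<⋯<i_{2k}} of {1,…,n}, n = 2k+2, the number of monomials of multidegree (k,1,1,…,1) in the ℚ-algebra generated by these monomials equals 2^k. -/

import Mathlib

open MvPolynomial

/-- The alternating monomial `x_{i₀} y_{i₁} x_{i₂} y_{i₃} ⋯` associated with a finite subset
`s = {i₀ < i₁ < ⋯}` of indices: elements in even position (in the increasing ordering of `s`)
contribute an `x`-variable and elements in odd position a `y`-variable. -/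
noncomputable def altMon (n : ℕ) (s : Finset (Fin n)) :
    MvPolynomial (Fin n ⊕ Fin n) ℚ :=
  (((s.sort (· ≤ ·)).zipIdx.map Prod.swap).map fun p =>
    if p.1 % 2 = 0 then X (Sum.inl p.2) else X (Sum.inr p.2)).prod

noncomputable def altExp (n : ℕ) (s : Finset (Fin n)) : (Fin n ⊕ Fin n) →₀ ℕ :=
  (((s.sort (· ≤ ·)).zipIdx.map Prod.swap).map fun p =>
    Finsupp.single (if p.1 % 2 = 0 then Sum.inl p.2 else Sum.inr p.2) 1).sum

lemma X_mul_monomial {σ : Type*} (v : σ) (d : σ →₀ ℕ) :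
    X v * monomial d (1 : ℚ) = monomial (Finsupp.single v 1 + d) 1 := by
  rw [← pow_one (X v), X_pow_eq_monomial, monomial_mul, one_mul]

lemma altMon_eq_monomial (n : ℕ) (s : Finset (Fin n)) :
    altMon n s = monomial (altExp n s) 1 := by
  rw [altMon, altExp]
  generalize ((s.sort (· ≤ ·)).zipIdx.map Prod.swap) = l
  induction l with
  | nil => simp [monomial_zero']
  | cons p l ih =>
      simp only [List.map_cons, List.prod_cons, List.sum_cons, ih]
      by_cases hp : p.1 % 2 = 0
      · rw [if_pos hp, if_pos hp, X_mul_monomial]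
      · rw [if_neg hp, if_neg hp, X_mul_monomial]

/-- position of `i` in the increasing enumeration of `s`. -/
def posIn {n : ℕ} (s : Finset (Fin n)) (i : Fin n) : ℕ := (s.filter (· < i)).card

lemma sort_insert_max {n : ℕ} (s : Finset (Fin n)) (a : Fin n) (h : ∀ b ∈ s, b < a) :
    (insert a s).sort (· ≤ ·) = s.sort (· ≤ ·) ++ [a] := by
  have ha : a ∉ s := fun hmem => absurd (h a hmem) (lt_irrefl a)
  have hperm : ((insert a s).sort (· ≤ ·)).Perm (s.sort (· ≤ ·) ++ [a]) := by
    refine (Finset.sort_perm_toList _ _).trans ((Finset.toList_insert ha).trans ?_)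
    exact ((Finset.sort_perm_toList _ _).symm.cons a).trans
      (List.perm_append_singleton _ _).symm
  refine List.Perm.eq_of_pairwise' (Finset.pairwise_sort _ _) ?_ hperm
  refine List.pairwise_append.2 ⟨Finset.pairwise_sort _ _, List.pairwise_singleton _ a, ?_⟩
  intro b hb c hc
  rw [List.mem_singleton] at hc
  subst hc
  exact le_of_lt (h b ((Finset.mem_sort _).1 hb))

lemma altExp_insert_max {n : ℕ} (s : Finset (Fin n)) (a : Fin n) (h : ∀ b ∈ s, b < a) :
    altExp n (insert a s) = altExp n s +
      Finsupp.single (if s.card % 2 = 0 then Sum.inl a else Sum.inr a) 1 := by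
  rw [altExp, sort_insert_max s a h, List.zipIdx_append, List.map_append, List.map_append, List.sum_append]
  congr 1
  simp [Finset.length_sort, altExp]

lemma posIn_insert_self {n : ℕ} (s : Finset (Fin n)) (a : Fin n) (h : ∀ b ∈ s, b < a) :
    posIn (insert a s) a = s.card := by
  rw [posIn]
  congr 1
  ext b
  simp only [Finset.mem_filter, Finset.mem_insert]
  constructor
  · rintro ⟨hb | hb, hlt⟩
    · exact absurd hlt (by simp [hb])
    · exact hb
  · exact fun hb => ⟨Or.inr hb, h b hb⟩

lemma posIn_insert_of_ne {n : ℕ} (s : Finset (Fin n)) (a : Fin n)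
    (i : Fin n) (hi : ¬ a < i) : posIn (insert a s) i = posIn s i := by
  rw [posIn, posIn]
  congr 1
  ext b
  simp only [Finset.mem_filter, Finset.mem_insert]
  constructor
  · rintro ⟨hb | hb, hlt⟩
    · exact absurd hlt (hb ▸ hi)
    · exact ⟨hb, hlt⟩
  · exact fun ⟨hb, hlt⟩ => ⟨Or.inr hb, hlt⟩

lemma altExp_apply {n : ℕ} (s : Finset (Fin n)) :
    (∀ i, altExp n s (Sum.inl i) = if i ∈ s ∧ posIn s i % 2 = 0 then 1 else 0) ∧
    (∀ i, altExp n s (Sum.inr i) = if i ∈ s ∧ posIn s i % 2 = 1 then 1 else 0) := by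
  induction s using Finset.induction_on_max with
  | empty => constructor <;> intro i <;> simp [altExp]
  | insert a s hmax ih =>
      have ha : a ∉ s := fun hmem => absurd (hmax a hmem) (lt_irrefl a)
      rw [altExp_insert_max s a hmax]
      refine ⟨fun i => ?_, fun i => ?_⟩ <;> rw [Finsupp.add_apply]
      · by_cases hia : i = a
        · subst hia
          rw [posIn_insert_self s i hmax]
          have h0 : altExp n s (Sum.inl i) = 0 := by rw [ih.1]; simp [ha]
          rw [h0, zero_add]
          by_cases hc : s.card % 2 = 0
          · rw [if_pos hc, Finsupp.single_apply, if_pos rfl,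
              if_pos ⟨Finset.mem_insert_self _ _, hc⟩]
          · rw [if_neg hc, Finsupp.single_eq_of_ne (by simp), if_neg (by tauto)]
        · have hs : Finsupp.single (if s.card % 2 = 0 then Sum.inl a else Sum.inr a)
              (1:ℕ) (Sum.inl i) = 0 := by
            split <;> exact Finsupp.single_eq_of_ne (by simp [hia])
          rw [hs, add_zero, ih.1]
          by_cases his : i ∈ s
          · rw [posIn_insert_of_ne s a i (not_lt.2 (le_of_lt (hmax i his)))]
            simp [his, Finset.mem_insert, hia]
          · simp [his, Finset.mem_insert, hia]
      · by_cases hia : i = a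
        · subst hia
          rw [posIn_insert_self s i hmax]
          have h0 : altExp n s (Sum.inr i) = 0 := by rw [ih.2]; simp [ha]
          rw [h0, zero_add]
          by_cases hc : s.card % 2 = 0
          · rw [if_pos hc, Finsupp.single_eq_of_ne (by simp), if_neg (by
              rintro ⟨-, h2⟩; omega)]
          · rw [if_neg hc, Finsupp.single_apply, if_pos rfl,
              if_pos ⟨Finset.mem_insert_self _ _, by omega⟩]
        · have hs : Finsupp.single (if s.card % 2 = 0 then Sum.inl a else Sum.inr a)
              (1:ℕ) (Sum.inr i) = 0 := by
            split <;> exact Finsupp.single_eq_of_ne (by simp [hia])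
          rw [hs, add_zero, ih.2]
          by_cases his : i ∈ s
          · rw [posIn_insert_of_ne s a i (not_lt.2 (le_of_lt (hmax i his)))]
            simp [his, Finset.mem_insert, hia]
          · simp [his, Finset.mem_insert, hia]

lemma altExp_pair_sum {n : ℕ} (s : Finset (Fin n)) (i : Fin n) :
    altExp n s (Sum.inl i) + altExp n s (Sum.inr i) = if i ∈ s then 1 else 0 := by
  rw [(altExp_apply s).1, (altExp_apply s).2]
  by_cases his : i ∈ s
  · rcases Nat.even_or_odd (posIn s i) with he | ho
    · rw [Nat.even_iff] at he; simp [his, he]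
    · rw [Nat.odd_iff] at ho; simp [his, ho, (by omega : ¬ posIn s i % 2 = 0)]
  · simp [his]

lemma altExp_sums {n : ℕ} (s : Finset (Fin n)) :
    (∑ i, altExp n s (Sum.inl i)) = (s.card + 1) / 2 ∧
    (∑ i, altExp n s (Sum.inr i)) = s.card / 2 := by
  induction s using Finset.induction_on_max with
  | empty => constructor <;> simp [altExp]
  | insert a s hmax ih =>
      have ha : a ∉ s := fun hmem => absurd (hmax a hmem) (lt_irrefl a)
      have hcard : (insert a s).card = s.card + 1 := Finset.card_insert_of_notMem ha
      rw [altExp_insert_max s a hmax]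
      simp only [Finsupp.add_apply, Finset.sum_add_distrib, hcard]
      by_cases hc : s.card % 2 = 0
      · rw [if_pos hc]
        have : (∑ i, Finsupp.single (Sum.inl a : Fin n ⊕ Fin n) (1:ℕ) (Sum.inl i)) = 1 := by
          simp [Finsupp.single_apply, Sum.inl.injEq]
        have h2 : (∑ i : Fin n, Finsupp.single (Sum.inl a : Fin n ⊕ Fin n) (1:ℕ) (Sum.inr i)) = 0 := by
          simp [Finsupp.single_apply]
        rw [this, h2, ih.1, ih.2]
        omega
      · rw [if_neg hc]
        have : (∑ i, Finsupp.single (Sum.inr a : Fin n ⊕ Fin n) (1:ℕ) (Sum.inr i)) = 1 := by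
          simp [Finsupp.single_apply, Sum.inr.injEq]
        have h2 : (∑ i : Fin n, Finsupp.single (Sum.inr a : Fin n ⊕ Fin n) (1:ℕ) (Sum.inl i)) = 0 := by
          simp [Finsupp.single_apply]
        rw [this, h2, ih.1, ih.2]
        omega

def gens (n : ℕ) : Set ((Fin n ⊕ Fin n) →₀ ℕ) :=
  {d | ∃ s : Finset (Fin n), Odd s.card ∧ d = altExp n s}

noncomputable def DD (n : ℕ) : AddSubmonoid ((Fin n ⊕ Fin n) →₀ ℕ) := AddSubmonoid.closure (gens n)

noncomputable def SS (n : ℕ) : Subalgebra ℚ (MvPolynomial (Fin n ⊕ Fin n) ℚ) where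
  carrier := {p | ∀ d ∈ p.support, d ∈ DD n}
  zero_mem' := by intro d hd; simp at hd
  one_mem' := by
    intro d hd
    rw [show (1 : MvPolynomial (Fin n ⊕ Fin n) ℚ) = monomial 0 1 by simp,
      support_monomial] at hd
    rw [if_neg one_ne_zero, Finset.mem_singleton] at hd
    exact hd ▸ (DD n).zero_mem
  add_mem' := by
    intro a b ha hb d hd
    rcases Finset.mem_union.1 (MvPolynomial.support_add hd) with h | h
    · exact ha d h
    · exact hb d h
  mul_mem' := by
    intro a b ha hb d hd
    rcases Finset.mem_add.1 (MvPolynomial.support_mul a b hd) with ⟨u, hu, v, hv, rfl⟩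
    exact (DD n).add_mem (ha u hu) (hb v hv)
  algebraMap_mem' := by
    intro r d hd
    rw [MvPolynomial.algebraMap_eq, show (C r : MvPolynomial (Fin n ⊕ Fin n) ℚ)
      = monomial 0 r from rfl, support_monomial] at hd
    split at hd
    · simp at hd
    · rw [Finset.mem_singleton] at hd
      exact hd ▸ (DD n).zero_mem

lemma mem_DD_of_mem_adjoin {n : ℕ} {m : (Fin n ⊕ Fin n) →₀ ℕ}
    (hm : monomial m (1 : ℚ) ∈ Algebra.adjoin ℚ
      {g | ∃ s : Finset (Fin n), Odd s.card ∧ g = altMon n s}) : m ∈ DD n := by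
  have hle : Algebra.adjoin ℚ
      {g | ∃ s : Finset (Fin n), Odd s.card ∧ g = altMon n s} ≤ SS n := by
    apply Algebra.adjoin_le
    rintro g ⟨s, hs, rfl⟩
    intro d hd
    rw [altMon_eq_monomial, support_monomial, if_neg one_ne_zero,
      Finset.mem_singleton] at hd
    exact hd ▸ AddSubmonoid.subset_closure ⟨s, hs, rfl⟩
  have := hle hm
  have hd : m ∈ (monomial m (1:ℚ)).support := by
    rw [support_monomial, if_neg one_ne_zero]; exact Finset.mem_singleton_self m
  exact this m hd

lemma multiset_finsupp_sum_apply {α : Type*} (M : Multiset ((α →₀ ℕ)))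
    (v : α) : M.sum v = (M.map (fun f => f v)).sum := by
  induction M using Multiset.induction_on with
  | empty => simp
  | cons f M ih => simp [ih]

lemma multiset_sum_swap {α β : Type*} (M : Multiset α) (t : Finset β) (g : α → β → ℕ) :
    ∑ i ∈ t, (M.map fun d => g d i).sum = (M.map fun d => ∑ i ∈ t, g d i).sum := by
  induction M using Multiset.induction_on with
  | empty => simp
  | cons f M ih => simp [Finset.sum_add_distrib, ih]

lemma decomp {n k : ℕ} (hnk : n = 2 * k + 2) {m : (Fin n ⊕ Fin n) →₀ ℕ}
    (hm : m ∈ DD n) (hy : (∑ i, m (Sum.inr i)) = k)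
    (hx : ∀ i, m (Sum.inl i) + m (Sum.inr i) = 1) :
    ∃ s t : Finset (Fin n), Odd s.card ∧ Odd t.card ∧ (∀ i, i ∈ s ↔ i ∉ t) ∧
      m = altExp n s + altExp n t := by
  obtain ⟨M, hM, hsum⟩ := AddSubmonoid.exists_multiset_of_mem_closure hm
  -- total x-degree is k + 2
  have hxsum : (∑ i, m (Sum.inl i)) = k + 2 := by
    have h1 : (∑ i, (m (Sum.inl i) + m (Sum.inr i))) = 2 * k + 2 := by
      simp only [hx]
      simp [hnk]
    rw [Finset.sum_add_distrib, hy] at h1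
    omega
  -- card M = 2
  have hcard : Multiset.card M = 2 := by
    have hL : (∑ i, m (Sum.inl i)) =
        (M.map fun d => ∑ i, d (Sum.inl i)).sum := by
      rw [← multiset_sum_swap]
      exact Finset.sum_congr rfl fun i _ => by
        rw [← hsum, multiset_finsupp_sum_apply]
    have hR : (∑ i, m (Sum.inr i)) =
        (M.map fun d => ∑ i, d (Sum.inr i)).sum := by
      rw [← multiset_sum_swap]
      exact Finset.sum_congr rfl fun i _ => by
        rw [← hsum, multiset_finsupp_sum_apply]
    have hstep : (M.map fun d => ∑ i, d (Sum.inl i)).sum =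
        (M.map fun d => (∑ i, d (Sum.inr i)) + 1).sum := by
      apply congrArg
      apply Multiset.map_congr rfl
      intro d hd
      obtain ⟨s, hsodd, rfl⟩ := hM d hd
      rw [(altExp_sums s).1, (altExp_sums s).2]
      obtain ⟨c, hc⟩ := hsodd
      omega
    rw [hxsum] at hL
    rw [hy] at hR
    have : (M.map fun d => (∑ i, d (Sum.inr i)) + 1).sum =
        (M.map fun d => ∑ i, d (Sum.inr i)).sum + Multiset.card M := by
      rw [Multiset.sum_map_add]
      simp
    omega
  obtain ⟨d1, d2, rfl⟩ := Multiset.card_eq_two.1 hcard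
  obtain ⟨s, hs, rfl⟩ := hM d1 (by simp)
  obtain ⟨t, ht, rfl⟩ := hM d2 (by simp)
  have hmst : m = altExp n s + altExp n t := by
    rw [← hsum]
    simp [Multiset.sum_cons]
  refine ⟨s, t, hs, ht, fun i => ?_, hmst⟩
  have := hx i
  rw [hmst] at this
  simp only [Finsupp.add_apply] at this
  have h2 : (altExp n s (Sum.inl i) + altExp n s (Sum.inr i)) +
      (altExp n t (Sum.inl i) + altExp n t (Sum.inr i)) = 1 := by omega
  rw [altExp_pair_sum, altExp_pair_sum] at h2
  by_cases his : i ∈ s <;> by_cases hit : i ∈ t <;> simp [his, hit] at h2 ⊢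

def good (k : ℕ) (f : Fin (2 * k + 2) → Bool) : Prop :=
  f ⟨0, by omega⟩ = false ∧ f ⟨2 * k + 1, by omega⟩ = false ∧
  ∀ j, ∀ hj : j < k, f ⟨2 * j + 1, by omega⟩ ≠ f ⟨2 * j + 2, by omega⟩

lemma posIn_bot {n : ℕ} (p : Finset (Fin n)) (i : Fin n) (hi : i.val = 0) :
    posIn p i = 0 := by
  rw [posIn, Finset.card_eq_zero, Finset.filter_eq_empty_iff]
  intro b _
  rw [Fin.lt_def, hi]
  omega

lemma posIn_add {n : ℕ} {s t : Finset (Fin n)} (hpart : ∀ j, j ∈ s ↔ j ∉ t) (i : Fin n) :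
    posIn s i + posIn t i = i.val := by
  have hdisj : Disjoint (s.filter (· < i)) (t.filter (· < i)) := by
    rw [Finset.disjoint_left]
    intro j hj hj'
    rw [Finset.mem_filter] at hj hj'
    exact ((hpart j).1 hj.1) hj'.1
  have hunion : (s.filter (· < i)) ∪ (t.filter (· < i)) = Finset.Iio i := by
    ext j
    simp only [Finset.mem_union, Finset.mem_filter, Finset.mem_Iio]
    constructor
    · rintro (⟨-, h⟩ | ⟨-, h⟩) <;> exact h
    · intro hj
      by_cases hjs : j ∈ s
      · exact Or.inl ⟨hjs, hj⟩
      · exact Or.inr ⟨by rcases hpart j with ⟨h1, h2⟩; by_contra hc; exact hjs (h2 hc), hj⟩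
  have := Finset.card_union_of_disjoint hdisj
  rw [hunion, Fin.card_Iio] at this
  rw [posIn, posIn, ← this]

lemma posIn_succ {n : ℕ} (p : Finset (Fin n)) (i i' : Fin n) (h : i'.val = i.val + 1) :
    posIn p i' = posIn p i + (if i ∈ p then 1 else 0) := by
  have hfil : p.filter (· < i') = p.filter (· < i) ∪ p.filter (· = i) := by
    rw [← Finset.filter_or]
    apply Finset.filter_congr
    intro j _
    rw [Fin.lt_def, Fin.lt_def, h]
    constructor
    · intro hj
      rcases Nat.lt_or_ge j.val i.val with h1 | h1
      · exact Or.inl h1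
      · exact Or.inr (Fin.ext (by omega))
    · rintro (hj | rfl)
      · omega
      · omega
  have hdisj : Disjoint (p.filter (· < i)) (p.filter (· = i)) := by
    rw [Finset.disjoint_left]
    intro j hj hj'
    rw [Finset.mem_filter] at hj hj'
    rw [hj'.2] at hj
    exact absurd hj.2 (lt_irrefl i)
  rw [posIn, hfil, Finset.card_union_of_disjoint hdisj, Finset.filter_eq']
  split <;> simp [posIn]

lemma posIn_top {n : ℕ} (p : Finset (Fin n)) (i : Fin n) (htop : ∀ j : Fin n, j ≤ i)
    (hi : i ∈ p) : posIn p i + 1 = p.card := by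
  have hfil : p.filter (· < i) = p.erase i := by
    ext j
    simp only [Finset.mem_filter, Finset.mem_erase]
    constructor
    · exact fun ⟨hj, hlt⟩ => ⟨ne_of_lt hlt, hj⟩
    · exact fun ⟨hne, hj⟩ => ⟨hj, lt_of_le_of_ne (htop j) hne⟩
  rw [posIn, hfil, Finset.card_erase_of_mem hi]
  have : 1 ≤ p.card := Finset.card_pos.2 ⟨i, hi⟩
  omega

lemma good_of_partition {k : ℕ} {s t : Finset (Fin (2 * k + 2))}
    (hs : Odd s.card) (ht : Odd t.card) (hpart : ∀ j, j ∈ s ↔ j ∉ t)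
    {m : (Fin (2 * k + 2) ⊕ Fin (2 * k + 2)) →₀ ℕ}
    (hm : m = altExp (2 * k + 2) s + altExp (2 * k + 2) t) :
    good k (fun i => decide (m (Sum.inr i) = 1)) := by
  have hlabel : ∀ i, m (Sum.inr i) = 1 ↔
      ((i ∈ s ∧ posIn s i % 2 = 1) ∨ (i ∈ t ∧ posIn t i % 2 = 1)) := by
    intro i
    rw [hm, Finsupp.add_apply, (altExp_apply s).2, (altExp_apply t).2]
    by_cases his : i ∈ s <;> by_cases hit : i ∈ t
    · exact absurd hit ((hpart i).1 his)
    · by_cases ho : posIn s i % 2 = 1 <;> simp [his, hit, ho]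
    · by_cases ho : posIn t i % 2 = 1 <;> simp [his, hit, ho]
    · simp [his, hit]
  refine ⟨?_, ?_, ?_⟩
  · rw [decide_eq_false_iff_not, hlabel]
    rintro (⟨-, h⟩ | ⟨-, h⟩) <;> rw [posIn_bot _ _ rfl] at h <;> omega
  · rw [decide_eq_false_iff_not, hlabel]
    have htop : ∀ j : Fin (2 * k + 2), j ≤ (⟨2 * k + 1, by omega⟩ : Fin (2 * k + 2)) := by
      intro j
      rw [Fin.le_def]
      have := j.isLt
      simp only
      omega
    rintro (⟨hmem, h⟩ | ⟨hmem, h⟩)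
    · have := posIn_top s _ htop hmem
      obtain ⟨c, hc⟩ := hs
      omega
    · have := posIn_top t _ htop hmem
      obtain ⟨c, hc⟩ := ht
      omega
  · intro j hj
    simp only [ne_eq, decide_eq_decide]
    set i : Fin (2 * k + 2) := ⟨2 * j + 1, by omega⟩
    set i' : Fin (2 * k + 2) := ⟨2 * j + 2, by omega⟩
    have hsucc : i'.val = i.val + 1 := rfl
    have hparity := posIn_add hpart i
    have hval : i.val = 2 * j + 1 := rfl
    rw [hlabel i, hlabel i']
    have hP1 := posIn_succ s i i' hsucc
    have hP2 := posIn_succ t i i' hsucc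
    by_cases his : i ∈ s <;> by_cases his' : i' ∈ s
    · have hit : i ∉ t := (hpart i).1 his
      have hit' : i' ∉ t := (hpart i').1 his'
      rw [if_pos his] at hP1
      simp only [his, his', hit, hit', true_and, false_and, or_false]
      omega
    · have hit : i ∉ t := (hpart i).1 his
      have hit' : i' ∈ t := by
        by_contra hc; exact his' ((hpart i').2 hc)
      rw [if_neg hit] at hP2
      simp only [his, his', hit, hit', true_and, false_and, or_false, false_or]
      omega
    · have hit : i ∈ t := by
        by_contra hc; exact his ((hpart i).2 hc)
      have hit' : i' ∉ t := (hpart i').1 his'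
      rw [if_neg his] at hP1
      simp only [his, his', hit, hit', true_and, false_and, or_false, false_or]
      omega
    · have hit : i ∈ t := by
        by_contra hc; exact his ((hpart i).2 hc)
      have hit' : i' ∈ t := by
        by_contra hc; exact his' ((hpart i').2 hc)
      rw [if_pos hit] at hP2
      simp only [his, his', hit, hit', true_and, false_and, false_or]
      omega

def build (n : ℕ) (f : Fin n → Bool) : ℕ → Finset (Fin n) × Finset (Fin n)
  | 0 => (∅, ∅)
  | j + 1 =>
    if h : j < n then
      if f ⟨j, h⟩ = decide ((build n f j).1.card % 2 = 1) then
        (insert ⟨j, h⟩ (build n f j).1, (build n f j).2)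
      else ((build n f j).1, insert ⟨j, h⟩ (build n f j).2)
    else build n f j

def yc (n : ℕ) (f : Fin n → Bool) (j : ℕ) : ℕ :=
  ∑ i ∈ Finset.range j, (if h : i < n then (if f ⟨i, h⟩ then 1 else 0) else 0)

lemma yc_succ (n : ℕ) (f : Fin n → Bool) (j : ℕ) :
    yc n f (j + 1) = yc n f j + (if h : j < n then (if f ⟨j, h⟩ then 1 else 0) else 0) :=
  Finset.sum_range_succ _ _

lemma yc_odd (k : ℕ) (f : Fin (2 * k + 2) → Bool) (hg : good k f) :
    ∀ q, q ≤ k → yc (2 * k + 2) f (2 * q + 1) = q := by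
  intro q
  induction q with
  | zero =>
      intro _
      rw [show 2 * 0 + 1 = 0 + 1 by omega, yc_succ, dif_pos (by omega : 0 < 2 * k + 2)]
      rw [show f ⟨0, by omega⟩ = false from hg.1]
      simp [yc]
  | succ q ih =>
      intro hq
      have hq' : q < k := by omega
      have e1 : 2 * (q + 1) + 1 = (2 * q + 2) + 1 := by omega
      have e2 : 2 * q + 2 = (2 * q + 1) + 1 := by omega
      rw [e1, yc_succ, e2, yc_succ, ih (by omega),
        dif_pos (by omega : 2 * q + 1 < 2 * k + 2),
        dif_pos (by omega : 2 * q + 2 < 2 * k + 2)]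
      have hpair := hg.2.2 q hq'
      cases h1 : f ⟨2 * q + 1, by omega⟩ <;> cases h2 : f ⟨2 * q + 2, by omega⟩ <;>
        rw [h1, h2] at hpair <;> simp at hpair ⊢ <;> omega

lemma build_inv (k : ℕ) (f : Fin (2 * k + 2) → Bool) (hg : good k f) :
    ∀ j, j ≤ 2 * k + 2 →
      (∀ x ∈ (build (2 * k + 2) f j).1, x.val < j) ∧
      (∀ x ∈ (build (2 * k + 2) f j).2, x.val < j) ∧
      (∀ x : Fin (2 * k + 2), x.val < j →
        x ∈ (build (2 * k + 2) f j).1 ∨ x ∈ (build (2 * k + 2) f j).2) ∧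
      (∀ x, ¬(x ∈ (build (2 * k + 2) f j).1 ∧ x ∈ (build (2 * k + 2) f j).2)) ∧
      ((build (2 * k + 2) f j).1.card + (build (2 * k + 2) f j).2.card = j) ∧
      (∀ x ∈ (build (2 * k + 2) f j).1,
        f x = decide (posIn (build (2 * k + 2) f j).1 x % 2 = 1)) ∧
      (∀ x ∈ (build (2 * k + 2) f j).2,
        f x = decide (posIn (build (2 * k + 2) f j).2 x % 2 = 1)) ∧
      (yc (2 * k + 2) f j =
        (build (2 * k + 2) f j).1.card / 2 + (build (2 * k + 2) f j).2.card / 2) := by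
  intro j
  induction j with
  | zero =>
      intro _
      refine ⟨?_, ?_, ?_, ?_, ?_, ?_, ?_, ?_⟩ <;> simp [build, yc]
  | succ j ih =>
      intro hj1
      obtain ⟨I1s, I1t, I2, Idisj, I3, I4s, I4t, I5⟩ := ih (by omega)
      have h : j < 2 * k + 2 := by omega
      have hjval : ((⟨j, h⟩ : Fin (2 * k + 2))).val = j := rfl
      set s := (build (2 * k + 2) f j).1 with hs
      set t := (build (2 * k + 2) f j).2 with ht
      have hxj : (⟨j, h⟩ : Fin (2 * k + 2)) ∉ s := fun hc => absurd (I1s _ hc) (by simp)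
      have hxj' : (⟨j, h⟩ : Fin (2 * k + 2)) ∉ t := fun hc => absurd (I1t _ hc) (by simp)
      have hmaxs : ∀ b ∈ s, b < (⟨j, h⟩ : Fin (2 * k + 2)) := fun b hb => Fin.lt_def.2 (I1s b hb)
      have hmaxt : ∀ b ∈ t, b < (⟨j, h⟩ : Fin (2 * k + 2)) := fun b hb => Fin.lt_def.2 (I1t b hb)
      have hycs : yc (2 * k + 2) f (j + 1) =
          yc (2 * k + 2) f j + (if f ⟨j, h⟩ then 1 else 0) := by
        rw [yc_succ, dif_pos h]
      rw [show build (2 * k + 2) f (j + 1) =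
        if f ⟨j, h⟩ = decide ((build (2 * k + 2) f j).1.card % 2 = 1) then
          (insert ⟨j, h⟩ (build (2 * k + 2) f j).1, (build (2 * k + 2) f j).2)
        else ((build (2 * k + 2) f j).1, insert ⟨j, h⟩ (build (2 * k + 2) f j).2) by
          rw [build, dif_pos h]]
      by_cases hb : f ⟨j, h⟩ = decide (s.card % 2 = 1)
      · rw [← hs, ← ht, if_pos hb]
        simp only
        have hcards : (insert (⟨j, h⟩ : Fin (2 * k + 2)) s).card = s.card + 1 :=
          Finset.card_insert_of_notMem hxj
        refine ⟨?_, ?_, ?_, ?_, ?_, ?_, ?_, ?_⟩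
        · intro x hx
          rcases Finset.mem_insert.1 hx with rfl | hx
          · omega
          · exact lt_trans (I1s x hx) (by omega)
        · exact fun x hx => lt_trans (I1t x hx) (by omega)
        · intro x hx
          rcases Nat.lt_or_ge x.val j with h1 | h1
          · rcases I2 x h1 with h2 | h2
            · exact Or.inl (Finset.mem_insert_of_mem h2)
            · exact Or.inr h2
          · have : x = ⟨j, h⟩ := Fin.ext (by rw [hjval]; omega)
            exact Or.inl (this ▸ Finset.mem_insert_self _ _)
        · rintro x ⟨hx1, hx2⟩
          rcases Finset.mem_insert.1 hx1 with rfl | hx1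
          · exact hxj' hx2
          · exact Idisj x ⟨hx1, hx2⟩
        · rw [hcards]; omega
        · intro x hx
          rcases Finset.mem_insert.1 hx with rfl | hx
          · rw [posIn_insert_self s _ hmaxs, hb]
          · rw [posIn_insert_of_ne s ⟨j, h⟩ x (fun hc => absurd (I1s x hx)
              (by rw [Fin.lt_def] at hc; omega))]
            exact I4s x hx
        · exact I4t
        · rw [hycs, hcards, I5]
          cases hf : f ⟨j, h⟩
          · replace hb : ¬ (s.card % 2 = 1) := by
              rw [hf] at hb; exact of_decide_eq_false hb.symm
            rw [if_neg (by simp)]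
            omega
          · replace hb : s.card % 2 = 1 := by
              rw [hf] at hb; exact of_decide_eq_true hb.symm
            rw [if_pos rfl]
            omega
      · rw [← hs, ← ht, if_neg hb]
        simp only
        -- the incoming label must match the parity of `t`
        have hbt : f ⟨j, h⟩ = decide (t.card % 2 = 1) := by
          by_contra hbt
          cases hf : f ⟨j, h⟩ <;> rw [hf] at hb hbt hycs <;>
            simp at hb hbt hycs <;>
          · obtain ⟨q, hq⟩ : ∃ q, j = 2 * q := ⟨j / 2, by omega⟩
            have hG := yc_odd k f hg q (by omega)
            rw [show 2 * q + 1 = j + 1 by omega] at hG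
            omega
        have hcardt : (insert (⟨j, h⟩ : Fin (2 * k + 2)) t).card = t.card + 1 :=
          Finset.card_insert_of_notMem hxj'
        refine ⟨?_, ?_, ?_, ?_, ?_, ?_, ?_, ?_⟩
        · exact fun x hx => lt_trans (I1s x hx) (by omega)
        · intro x hx
          rcases Finset.mem_insert.1 hx with rfl | hx
          · omega
          · exact lt_trans (I1t x hx) (by omega)
        · intro x hx
          rcases Nat.lt_or_ge x.val j with h1 | h1
          · rcases I2 x h1 with h2 | h2
            · exact Or.inl h2
            · exact Or.inr (Finset.mem_insert_of_mem h2)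
          · have : x = ⟨j, h⟩ := Fin.ext (by rw [hjval]; omega)
            exact Or.inr (this ▸ Finset.mem_insert_self _ _)
        · rintro x ⟨hx1, hx2⟩
          rcases Finset.mem_insert.1 hx2 with rfl | hx2
          · exact hxj hx1
          · exact Idisj x ⟨hx1, hx2⟩
        · rw [hcardt]; omega
        · exact I4s
        · intro x hx
          rcases Finset.mem_insert.1 hx with rfl | hx
          · rw [posIn_insert_self t _ hmaxt, hbt]
          · rw [posIn_insert_of_ne t ⟨j, h⟩ x (fun hc => absurd (I1t x hx)
              (by rw [Fin.lt_def] at hc; omega))]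
            exact I4t x hx
        · rw [hycs, hcardt, I5]
          cases hf : f ⟨j, h⟩
          · replace hbt : ¬ (t.card % 2 = 1) := by
              rw [hf] at hbt; exact of_decide_eq_false hbt.symm
            rw [if_neg (by simp)]
            omega
          · replace hbt : t.card % 2 = 1 := by
              rw [hf] at hbt; exact of_decide_eq_true hbt.symm
            rw [if_pos rfl]
            omega

lemma build_spec (k : ℕ) (f : Fin (2 * k + 2) → Bool) (hg : good k f) :
    ∃ s t : Finset (Fin (2 * k + 2)), Odd s.card ∧ Odd t.card ∧
      s.card + t.card = 2 * k + 2 ∧ (∀ i, i ∈ s ↔ i ∉ t) ∧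
      (∀ i, f i = decide ((i ∈ s ∧ posIn s i % 2 = 1) ∨ (i ∈ t ∧ posIn t i % 2 = 1))) := by
  obtain ⟨I1s, I1t, I2, Idisj, I3, I4s, I4t, I5⟩ := build_inv k f hg (2 * k + 2) le_rfl
  set s := (build (2 * k + 2) f (2 * k + 2)).1 with hs
  set t := (build (2 * k + 2) f (2 * k + 2)).2 with ht
  have hyc : yc (2 * k + 2) f (2 * k + 2) = k := by
    have h1 : yc (2 * k + 2) f (2 * k + 1 + 1) = yc (2 * k + 2) f (2 * k + 1) +
        (if h : 2 * k + 1 < 2 * k + 2 then (if f ⟨2 * k + 1, h⟩ then 1 else 0) else 0) :=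
      yc_succ _ _ _
    rw [dif_pos (by omega : 2 * k + 1 < 2 * k + 2),
      show f ⟨2 * k + 1, by omega⟩ = false from hg.2.1] at h1
    simpa [yc_odd k f hg k le_rfl] using h1
  have hodd : Odd s.card ∧ Odd t.card := by
    rw [hyc] at I5
    constructor <;> rw [Nat.odd_iff] <;> omega
  refine ⟨s, t, hodd.1, hodd.2, I3, fun i => ⟨fun hi hit => Idisj i ⟨hi, hit⟩, fun hit => ?_⟩,
    fun i => ?_⟩
  · rcases I2 i i.isLt with h | h
    · exact h
    · exact absurd h hit
  · rcases I2 i i.isLt with hmem | hmem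
    · have hit : i ∉ t := fun hc => Idisj i ⟨hmem, hc⟩
      rw [I4s i hmem, decide_eq_decide]
      constructor
      · exact fun h => Or.inl ⟨hmem, h⟩
      · rintro (⟨-, h⟩ | ⟨h, -⟩)
        · exact h
        · exact absurd h hit
    · have his : i ∉ s := fun hc => Idisj i ⟨hc, hmem⟩
      rw [I4t i hmem, decide_eq_decide]
      constructor
      · exact fun h => Or.inr ⟨hmem, h⟩
      · rintro (⟨h, -⟩ | ⟨-, h⟩)
        · exact absurd h his
        · exact h

noncomputable def msOf {n : ℕ} (f : Fin n → Bool) : (Fin n ⊕ Fin n) →₀ ℕ :=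
  Finsupp.equivFunOnFinite.symm
    (Sum.elim (fun i => if f i then 0 else 1) (fun i => if f i then 1 else 0))

lemma msOf_inl {n : ℕ} (f : Fin n → Bool) (i : Fin n) :
    msOf f (Sum.inl i) = if f i then 0 else 1 := by
  rw [msOf, Finsupp.equivFunOnFinite_symm_apply_apply]
  rfl

lemma msOf_inr {n : ℕ} (f : Fin n → Bool) (i : Fin n) :
    msOf f (Sum.inr i) = if f i then 1 else 0 := by
  rw [msOf, Finsupp.equivFunOnFinite_symm_apply_apply]
  rfl

def fc (k : ℕ) (c : Fin k → Bool) (i : Fin (2 * k + 2)) : Bool :=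
  if h : 1 ≤ i.val ∧ i.val ≤ 2 * k then
    (if i.val % 2 = 1 then c ⟨(i.val - 1) / 2, by omega⟩ else !(c ⟨(i.val - 2) / 2, by omega⟩))
  else false

lemma fc_zero (k : ℕ) (c : Fin k → Bool) (i : Fin (2 * k + 2)) (hi : i.val = 0) :
    fc k c i = false := by
  rw [fc, dif_neg (by omega)]

lemma fc_last (k : ℕ) (c : Fin k → Bool) (i : Fin (2 * k + 2)) (hi : i.val = 2 * k + 1) :
    fc k c i = false := by
  rw [fc, dif_neg (by omega)]

lemma fc_odd (k : ℕ) (c : Fin k → Bool) (i : Fin (2 * k + 2)) (j : ℕ) (hj : j < k)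
    (hi : i.val = 2 * j + 1) : fc k c i = c ⟨j, hj⟩ := by
  rw [fc, dif_pos (by omega), if_pos (by omega)]
  congr 1
  exact Fin.ext (by simp only; omega)

lemma fc_even (k : ℕ) (c : Fin k → Bool) (i : Fin (2 * k + 2)) (j : ℕ) (hj : j < k)
    (hi : i.val = 2 * j + 2) : fc k c i = !(c ⟨j, hj⟩) := by
  rw [fc, dif_pos (by omega), if_neg (by omega)]
  congr 2
  exact Fin.ext (by simp only; omega)

lemma good_fc (k : ℕ) (c : Fin k → Bool) : good k (fc k c) := by
  refine ⟨fc_zero k c _ rfl, fc_last k c _ rfl, fun j hj => ?_⟩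
  rw [fc_odd k c _ j hj rfl, fc_even k c _ j hj rfl]
  cases c ⟨j, hj⟩ <;> simp

lemma msOf_eq (k : ℕ) (f : Fin (2 * k + 2) → Bool) (s t : Finset (Fin (2 * k + 2)))
    (hpart : ∀ i, i ∈ s ↔ i ∉ t)
    (hlab : ∀ i, f i = decide ((i ∈ s ∧ posIn s i % 2 = 1) ∨ (i ∈ t ∧ posIn t i % 2 = 1))) :
    msOf f = altExp (2 * k + 2) s + altExp (2 * k + 2) t := by
  ext v
  cases v with
  | inl i =>
      rw [Finsupp.add_apply, (altExp_apply s).1 i, (altExp_apply t).1 i, msOf_inl, hlab i]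
      by_cases his : i ∈ s
      · have hit : i ∉ t := (hpart i).1 his
        by_cases hp : posIn s i % 2 = 1
        · have hp0 : ¬ (posIn s i % 2 = 0) := by omega
          simp [his, hit, hp, hp0]
        · have hp0 : posIn s i % 2 = 0 := by omega
          simp [his, hit, hp, hp0]
      · have hit : i ∈ t := by by_contra hc; exact his ((hpart i).2 hc)
        by_cases hp : posIn t i % 2 = 1
        · have hp0 : ¬ (posIn t i % 2 = 0) := by omega
          simp [his, hit, hp, hp0]
        · have hp0 : posIn t i % 2 = 0 := by omega
          simp [his, hit, hp, hp0]
  | inr i =>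
      rw [Finsupp.add_apply, (altExp_apply s).2 i, (altExp_apply t).2 i, msOf_inr, hlab i]
      by_cases his : i ∈ s
      · have hit : i ∉ t := (hpart i).1 his
        by_cases hp : posIn s i % 2 = 1
        · simp [his, hit, hp]
        · simp [his, hit, hp]
      · have hit : i ∈ t := by by_contra hc; exact his ((hpart i).2 hc)
        by_cases hp : posIn t i % 2 = 1
        · simp [his, hit, hp]
        · simp [his, hit, hp]


/-- With the initial monomials `in(Q_{i₀…i_{2k}}) = x_{i₀} y_{i₁} ⋯ x_{i_{2k}}`
for all odd subsets of `{1,…,n}`, `n = 2k+2`, the number of monomials of multidegree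
`(k,1,…,1)` in the algebra they generate is `2^k`. -/
theorem stmt12 (k : ℕ)
    (A : Subalgebra ℚ (MvPolynomial (Fin (2 * k + 2) ⊕ Fin (2 * k + 2)) ℚ))
    (hA : A = Algebra.adjoin ℚ
      {g | ∃ s : Finset (Fin (2 * k + 2)), Odd s.card ∧ g = altMon (2 * k + 2) s}) :
    Nat.card {m : (Fin (2 * k + 2) ⊕ Fin (2 * k + 2)) →₀ ℕ //
        (MvPolynomial.monomial m (1 : ℚ)) ∈ A ∧
        (∑ i : Fin (2 * k + 2), m (Sum.inr i)) = k ∧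
        (∀ i : Fin (2 * k + 2), m (Sum.inl i) + m (Sum.inr i) = 1)}
      = 2 ^ k := by

  subst hA
  have pack : ∀ c : Fin k → Bool,
      (MvPolynomial.monomial (msOf (fc k c)) (1 : ℚ)) ∈ Algebra.adjoin ℚ
        {g | ∃ s : Finset (Fin (2 * k + 2)), Odd s.card ∧ g = altMon (2 * k + 2) s} ∧
      (∑ i : Fin (2 * k + 2), msOf (fc k c) (Sum.inr i)) = k ∧
      (∀ i : Fin (2 * k + 2), msOf (fc k c) (Sum.inl i) + msOf (fc k c) (Sum.inr i) = 1) := by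
    intro c
    obtain ⟨s, t, hs, ht, hcards, hpart, hlab⟩ := build_spec k (fc k c) (good_fc k c)
    have hmsof := msOf_eq k (fc k c) s t hpart hlab
    refine ⟨?_, ?_, ?_⟩
    · have hmul : MvPolynomial.monomial (msOf (fc k c)) (1 : ℚ) =
          altMon (2 * k + 2) s * altMon (2 * k + 2) t := by
        rw [altMon_eq_monomial, altMon_eq_monomial, monomial_mul, one_mul, hmsof]
      rw [hmul]
      exact Subalgebra.mul_mem _ (Algebra.subset_adjoin ⟨s, hs, rfl⟩)
        (Algebra.subset_adjoin ⟨t, ht, rfl⟩)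
    · rw [hmsof]
      simp only [Finsupp.add_apply]
      rw [Finset.sum_add_distrib, (altExp_sums s).2, (altExp_sums t).2]
      obtain ⟨a, ha⟩ := hs
      obtain ⟨b, hb⟩ := ht
      omega
    · intro i
      rw [hmsof]
      simp only [Finsupp.add_apply]
      have h1 := altExp_pair_sum s i
      have h2 := altExp_pair_sum t i
      by_cases his : i ∈ s
      · have hit : i ∉ t := (hpart i).1 his
        rw [if_pos his] at h1; rw [if_neg hit] at h2; omega
      · have hit : i ∈ t := by by_contra hc; exact his ((hpart i).2 hc)
        rw [if_neg his] at h1; rw [if_pos hit] at h2; omega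
  set Φ : (Fin k → Bool) → {m : (Fin (2 * k + 2) ⊕ Fin (2 * k + 2)) →₀ ℕ //
        (MvPolynomial.monomial m (1 : ℚ)) ∈ Algebra.adjoin ℚ
          {g | ∃ s : Finset (Fin (2 * k + 2)), Odd s.card ∧ g = altMon (2 * k + 2) s} ∧
        (∑ i : Fin (2 * k + 2), m (Sum.inr i)) = k ∧
        (∀ i : Fin (2 * k + 2), m (Sum.inl i) + m (Sum.inr i) = 1)} :=
    fun c => ⟨msOf (fc k c), pack c⟩ with hΦ
  have hbij : Function.Bijective Φ := by
    constructor
    · intro c c' hcc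
      rw [hΦ, Subtype.mk.injEq] at hcc
      funext j
      have hcc2 := congrArg (fun m : (Fin (2 * k + 2) ⊕ Fin (2 * k + 2)) →₀ ℕ =>
        m (Sum.inr ⟨2 * j.val + 1, by omega⟩)) hcc
      simp only [msOf_inr] at hcc2
      rw [fc_odd k c _ j.val j.isLt rfl, fc_odd k c' _ j.val j.isLt rfl] at hcc2
      simp only [Fin.eta] at hcc2
      cases h1 : c j <;> cases h2 : c' j <;> rw [h1, h2] at hcc2 <;> simp_all
    · rintro ⟨m, hmA, hy, hx⟩
      have hmD := mem_DD_of_mem_adjoin hmA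
      obtain ⟨s, t, hs, ht, hpart, hmst⟩ := decomp rfl hmD hy hx
      set f : Fin (2 * k + 2) → Bool := fun i => decide (m (Sum.inr i) = 1) with hf
      have hgood : good k f := by
        have := good_of_partition hs ht hpart hmst
        rw [← hf] at this
        exact this
      refine ⟨fun j => f ⟨2 * j.val + 1, by omega⟩, ?_⟩
      rw [hΦ]
      apply Subtype.ext
      show msOf (fc k _) = m
      have hfc : fc k (fun j : Fin k => f ⟨2 * j.val + 1, by omega⟩) = f := by
        funext i
        by_cases h0 : i.val = 0
        · rw [fc_zero k _ i h0, show i = ⟨0, by omega⟩ from Fin.ext h0]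
          exact hgood.1.symm
        by_cases hlast : i.val = 2 * k + 1
        · rw [fc_last k _ i hlast, show i = ⟨2 * k + 1, by omega⟩ from Fin.ext hlast]
          exact hgood.2.1.symm
        have hub : i.val ≤ 2 * k := by have := i.isLt; omega
        have hlem : ∀ a b : Bool, a ≠ b → (!a) = b := by decide
        by_cases hpar : i.val % 2 = 1
        · have hj : (i.val - 1) / 2 < k := by omega
          rw [fc_odd k _ i ((i.val - 1) / 2) hj (by omega)]
          exact congrArg f (Fin.ext (show 2 * ((i.val - 1) / 2) + 1 = i.val by omega))
        · have hj : (i.val - 2) / 2 < k := by omega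
          rw [fc_even k _ i ((i.val - 2) / 2) hj (by omega)]
          have hival : f i = f ⟨2 * ((i.val - 2) / 2) + 2, by omega⟩ :=
            congrArg f (Fin.ext (show i.val = 2 * ((i.val - 2) / 2) + 2 by omega))
          rw [hival]
          exact hlem _ _ (fun h => hgood.2.2 ((i.val - 2) / 2) hj h)
      rw [hfc]
      ext v
      cases v with
      | inl i =>
          rw [msOf_inl]
          have := hx i
          by_cases h1 : m (Sum.inr i) = 1
          · simp only [hf, h1, decide_eq_true_eq]
            simp
            omega
          · simp only [hf, h1, decide_eq_true_eq]
            simp [h1]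
            omega
      | inr i =>
          rw [msOf_inr]
          have := hx i
          by_cases h1 : m (Sum.inr i) = 1
          · simp only [hf, h1]
            simp
          · simp only [hf, h1]
            simp [h1]
            omega
  calc Nat.card {m : (Fin (2 * k + 2) ⊕ Fin (2 * k + 2)) →₀ ℕ //
        (MvPolynomial.monomial m (1 : ℚ)) ∈ Algebra.adjoin ℚ
          {g | ∃ s : Finset (Fin (2 * k + 2)), Odd s.card ∧ g = altMon (2 * k + 2) s} ∧
        (∑ i : Fin (2 * k + 2), m (Sum.inr i)) = k ∧
        (∀ i : Fin (2 * k + 2), m (Sum.inl i) + m (Sum.inr i) = 1)}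
      = Nat.card (Fin k → Bool) := Nat.card_congr (Equiv.ofBijective Φ hbij).symm
    _ = 2 ^ k := by
        rw [Nat.card_eq_fintype_card, Fintype.card_fun, Fintype.card_bool, Fintype.card_fin]
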